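/- Let (L, [·,·], α, β) be a regular BiHom-Lie algebra and D ∈ C¹_{α,β}(L;L) a linear map commuting with α and β. Then D is a 1-cocycle for the α^s β^t-adjoint representation (i.e. d_{s,t}D = 0, equivalently D([α⁻¹β(u), v]) = [α^{s+1}β^t(u), D(v)] − [α^{s+1}β^t(v), D(u)] for all u, v) if and only if D is an α^{s+2}β^{t−1}-derivation of L. -/

import Mathlib

/-- `D ∈ C¹_{α,β}(L;L)` is a 1-cocycle of the `αˢβᵗ`-adjoint representation
iff `D` is an `α^{s+2}β^{t-1}`-derivation. -/
theorem stmt_16 {K : Type*} [Field K] {L : Type*} [AddCommGroup L] [Module K L]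
(br : L →ₗ[K] L →ₗ[K] L) (α β : L ≃ₗ[K] L)
    (hcomm : ∀ a, α (β a) = β (α a))
    (hαm : ∀ a b, α (br a b) = br (α a) (α b))
    (hβm : ∀ a b, β (br a b) = br (β a) (β b))
    (hskew : ∀ a a', br (β a) (α a') = - br (β a') (α a))
    (hjac : ∀ a a' a'', br (β (β a)) (br (β a') (α a''))
      + br (β (β a')) (br (β a'') (α a))
      + br (β (β a'')) (br (β a) (α a')) = 0)
    (s t : ℤ) (D : L →ₗ[K] L)
    (hDα : ∀ v, D (α v) = α (D v)) (hDβ : ∀ v, D (β v) = β (D v)) :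
    (∀ u v, - br ((α ^ (s + 1) * β ^ t) u) (D v) + br ((α ^ (s + 1) * β ^ t) v) (D u)
        + D (br ((α⁻¹ * β) u) v) = 0) ↔
    (∀ u v, D (br u v) = br (D u) ((α ^ (s + 2) * β ^ (t - 1)) v)
        + br ((α ^ (s + 2) * β ^ (t - 1)) u) (D v)) := by
  have hc : Commute α β := LinearEquiv.ext hcomm
  have happ : ∀ (e f : L ≃ₗ[K] L) (x : L), (e * f) x = e (f x) := fun _ _ _ => rfl
  have hcancel : ∀ (e : L ≃ₗ[K] L) (x : L), e (e⁻¹ x) = x := fun e x => e.apply_symm_apply x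
  have hDinv : ∀ (e : L ≃ₗ[K] L), (∀ v, D (e v) = e (D v)) → ∀ v, D (e⁻¹ v) = e⁻¹ (D v) := by
    intro e he v
    apply e.injective
    rw [← he, hcancel, hcancel]
  have hDzpow : ∀ (e : L ≃ₗ[K] L), (∀ v, D (e v) = e (D v)) →
      ∀ (n : ℤ) (v : L), D ((e ^ n) v) = (e ^ n) (D v) := by
    intro e he n
    induction n using Int.induction_on with
    | zero => intro v; simp
    | succ k ih =>
        intro v
        rw [zpow_add_one, happ, happ, ih, he]
    | pred k ih =>
        intro v
        rw [show (-(k:ℤ) - 1) = (-(k:ℤ)) + (-1) from by ring, zpow_add, zpow_neg_one,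
          happ, happ, ih, hDinv e he]
  have hmul : ∀ a b c d : ℤ, (α ^ a * β ^ b) * (α ^ c * β ^ d) = α ^ (a + c) * β ^ (b + d) := by
    intro a b c d
    have h := ((hc.symm).zpow_zpow b c).eq
    rw [zpow_add, zpow_add, mul_assoc, ← mul_assoc (β ^ b) (α ^ c) (β ^ d), h,
      mul_assoc (α ^ c), ← mul_assoc, ← mul_assoc]
  -- rewrite α, β, α⁻¹, β⁻¹ as zpow products
  have hα1 : α = α ^ (1:ℤ) * β ^ (0:ℤ) := by rw [zpow_one, zpow_zero, mul_one]
  have hβ1 : β = α ^ (0:ℤ) * β ^ (1:ℤ) := by rw [zpow_one, zpow_zero, one_mul]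
  have hαβi : α * β⁻¹ = α ^ (1:ℤ) * β ^ (-1:ℤ) := by rw [zpow_one, zpow_neg_one]
  have hαiβ : α⁻¹ * β = α ^ (-1:ℤ) * β ^ (1:ℤ) := by rw [zpow_one, zpow_neg_one]
  -- group identities
  have g2 : (α ^ (s+1) * β ^ t) * (α * β⁻¹) = α ^ (s+2) * β ^ (t-1) := by
    rw [hαβi, hmul, show s + 1 + 1 = s + 2 from by ring, show t + (-1) = t - 1 from by ring]
  have g1 : (α⁻¹ * β) * (α * β⁻¹) = 1 := by
    rw [hαβi, hαiβ, hmul]; norm_num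
  have g3 : (α * β⁻¹) * (α ^ (s+1) * β ^ t) = α ^ (s+2) * β ^ (t-1) := by
    rw [hαβi, hmul, show (1:ℤ) + (s + 1) = s + 2 from by ring,
      show (-1) + t = t - 1 from by ring]
  have g4 : (α ^ (s+2) * β ^ (t-1)) * (α⁻¹ * β) = α ^ (s+1) * β ^ t := by
    rw [hαiβ, hmul, show s + 2 + (-1) = s + 1 from by ring, show t - 1 + 1 = t from by ring]
  have g5 : β * (α ^ (s+1) * β ^ (t-1)) = α ^ (s+1) * β ^ t := by
    nth_rewrite 1 [hβ1]
    rw [hmul, show (0:ℤ) + (s + 1) = s + 1 from by ring,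
      show (1:ℤ) + (t - 1) = t from by ring]
  have g6 : α * (α ^ (s+1) * β ^ (t-1)) = α ^ (s+2) * β ^ (t-1) := by
    nth_rewrite 1 [hα1]
    rw [hmul, show (1:ℤ) + (s + 1) = s + 2 from by ring,
      show (0:ℤ) + (t - 1) = t - 1 from by ring]
  -- D commutes with the relevant operators
  have hDA : ∀ x, D ((α ^ (s+1) * β ^ t) x) = (α ^ (s+1) * β ^ t) (D x) := by
    intro x; rw [happ, happ, hDzpow α hDα, hDzpow β hDβ]
  have hDαβi : ∀ x, D ((α * β⁻¹) x) = (α * β⁻¹) (D x) := by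
    intro x; rw [happ, happ, hDα, hDinv β hDβ]
  have hDαiβ : ∀ x, D ((α⁻¹ * β) x) = (α⁻¹ * β) (D x) := by
    intro x; rw [happ, happ, hDinv α hDα, hDβ]
  constructor
  · intro h u v
    have h' := h ((α * β⁻¹) u) v
    have e1 : (α ^ (s+1) * β ^ t) ((α * β⁻¹) u) = (α ^ (s+2) * β ^ (t-1)) u := by
      rw [← happ, g2]
    have e2 : (α⁻¹ * β) ((α * β⁻¹) u) = u := by
      rw [← happ, g1]; rfl
    rw [e1, e2, hDαβi] at h'
    -- skew-symmetry step
    have e4 : br ((α ^ (s+1) * β ^ t) v) ((α * β⁻¹) (D u))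
        = - br (D u) ((α ^ (s+2) * β ^ (t-1)) v) := by
      have hs := hskew (β⁻¹ ((α ^ (s+1) * β ^ t) v)) (β⁻¹ (D u))
      rw [hcancel, hcancel] at hs
      have r1 : α (β⁻¹ (D u)) = (α * β⁻¹) (D u) := rfl
      have r2 : α (β⁻¹ ((α ^ (s+1) * β ^ t) v)) = (α ^ (s+2) * β ^ (t-1)) v := by
        show ((α * β⁻¹) * (α ^ (s+1) * β ^ t)) v = _
        rw [g3]
      rw [r1, r2] at hs
      exact hs
    rw [e4] at h'
    -- h' : - br (B u) (D v) + - br (D u) (B v) + D (br u v) = 0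
    apply eq_of_sub_eq_zero
    rw [← h']
    abel
  · intro h u v
    have h' := h ((α⁻¹ * β) u) v
    have e6 : (α ^ (s+2) * β ^ (t-1)) ((α⁻¹ * β) u) = (α ^ (s+1) * β ^ t) u := by
      rw [← happ, g4]
    rw [hDαiβ, e6] at h'
    have e7 : br ((α⁻¹ * β) (D u)) ((α ^ (s+2) * β ^ (t-1)) v)
        = - br ((α ^ (s+1) * β ^ t) v) (D u) := by
      have hs := hskew (α⁻¹ (D u)) ((α ^ (s+1) * β ^ (t-1)) v)
      have r1 : β (α⁻¹ (D u)) = (α⁻¹ * β) (D u) := by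
        show (β * α⁻¹) (D u) = (α⁻¹ * β) (D u)
        rw [(hc.inv_left).eq]
      have r2 : β ((α ^ (s+1) * β ^ (t-1)) v) = (α ^ (s+1) * β ^ t) v := by
        show (β * (α ^ (s+1) * β ^ (t-1))) v = _
        rw [g5]
      have r3 : α ((α ^ (s+1) * β ^ (t-1)) v) = (α ^ (s+2) * β ^ (t-1)) v := by
        show (α * (α ^ (s+1) * β ^ (t-1))) v = _
        rw [g6]
      have r4 : α (α⁻¹ (D u)) = D u := hcancel α (D u)
      rw [r1, r2, r3, r4] at hs
      exact hs
    rw [e7] at h'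
    rw [h']
    abel
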